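/- Let n ≥ 1 be an integer. Then ∏_{l=0}^{n−1} ∏_{m=0}^{n−1} ∫_0^1 x^l (1 − x^{n+1})^{(m+1)/(n+1)} dx = (n+1)^{−n²} · ( ∏_{l=0}^{n−1} Γ((l+1)/(n+1)) )^n · ( ∏_{l=0}^{n−1} Γ((l+1)/(n+1) + 1) )^n / ∏_{l=0}^{n−1} ∏_{m=0}^{n−1} Γ((l+m+2)/(n+1) + 1), where Γ denotes the real Gamma function. -/

import Mathlib

open MeasureTheory intervalIntegral Set

lemma betaReal {a b : ℝ} (ha : 0 < a) (hb : 0 < b) :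
    ∫ x in (0:ℝ)..1, x ^ (a - 1) * (1 - x) ^ (b - 1) =
      Real.Gamma a * Real.Gamma b / Real.Gamma (a + b) := by
  have h := Complex.Gamma_mul_Gamma_eq_betaIntegral (s := (a:ℂ)) (t := (b:ℂ))
    (by simpa using ha) (by simpa using hb)
  have hI : Complex.betaIntegral a b =
      ((∫ x in (0:ℝ)..1, x ^ (a - 1) * (1 - x) ^ (b - 1) : ℝ) : ℂ) := by
    rw [Complex.betaIntegral, ← intervalIntegral.integral_ofReal]
    apply intervalIntegral.integral_congr
    intro x hx
    rw [Set.uIcc_of_le zero_le_one] at hx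
    show (x:ℂ) ^ ((a:ℂ) - 1) * (1 - (x:ℂ)) ^ ((b:ℂ) - 1) = ((x ^ (a - 1) * (1 - x) ^ (b - 1) : ℝ) : ℂ)
    rw [Complex.ofReal_mul, Complex.ofReal_cpow hx.1,
      Complex.ofReal_cpow (by linarith [hx.2] : (0:ℝ) ≤ 1 - x)]
    push_cast
    ring
  rw [hI, ← Complex.ofReal_add, Complex.Gamma_ofReal, Complex.Gamma_ofReal,
    Complex.Gamma_ofReal, ← Complex.ofReal_mul, ← Complex.ofReal_mul] at h
  have h' := Complex.ofReal_inj.mp h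
  have hG : Real.Gamma (a + b) ≠ 0 := (Real.Gamma_pos_of_pos (by linarith)).ne'
  rw [eq_div_iff hG, h']
  ring

lemma integral_key (n l : ℕ) {s : ℝ} (hs : 0 < s) :
    ∫ x in (0:ℝ)..1, x ^ l * (1 - x ^ (n + 1)) ^ s =
      ((n:ℝ) + 1)⁻¹ * (Real.Gamma (((l:ℝ) + 1) / ((n:ℝ) + 1)) * Real.Gamma (s + 1) /
        Real.Gamma (((l:ℝ) + 1) / ((n:ℝ) + 1) + (s + 1))) := by
  set a : ℝ := ((l:ℝ) + 1) / ((n:ℝ) + 1) with ha_def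
  have hn1 : (0:ℝ) < (n:ℝ) + 1 := by positivity
  have ha : 0 < a := by positivity
  have hB := betaReal ha (by linarith : (0:ℝ) < s + 1)
  rw [show s + 1 - 1 = s by ring] at hB
  -- substitution x ↦ x^(n+1)
  have himg : (fun x : ℝ => x ^ (n + 1)) '' Set.Ioo 0 1 = Set.Ioo 0 1 := by
    ext u
    constructor
    · rintro ⟨x, ⟨hx0, hx1⟩, rfl⟩
      exact ⟨pow_pos hx0 _, pow_lt_one₀ hx0.le hx1 (Nat.succ_ne_zero n)⟩
    · rintro ⟨hu0, hu1⟩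
      refine ⟨u ^ ((1:ℝ) / ((n:ℝ) + 1)), ⟨Real.rpow_pos_of_pos hu0 _,
        Real.rpow_lt_one hu0.le hu1 (by positivity)⟩, ?_⟩
      show (u ^ ((1:ℝ) / ((n:ℝ) + 1))) ^ (n + 1) = u
      rw [← Real.rpow_natCast (u ^ ((1:ℝ) / ((n:ℝ) + 1))) (n + 1),
        ← Real.rpow_mul hu0.le]
      push_cast
      rw [div_mul_cancel₀ 1 (by positivity : (n:ℝ) + 1 ≠ 0), Real.rpow_one]
  have hderiv : ∀ x ∈ Set.Ioo (0:ℝ) 1,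
      HasDerivWithinAt (fun x : ℝ => x ^ (n + 1)) (((n:ℝ) + 1) * x ^ n) (Set.Ioo 0 1) x := by
    intro x _
    have := (hasDerivAt_pow (n + 1) x).hasDerivWithinAt (s := Set.Ioo (0:ℝ) 1)
    simpa using this
  have hinj : Set.InjOn (fun x : ℝ => x ^ (n + 1)) (Set.Ioo 0 1) := by
    intro x hx y hy h
    rcases lt_trichotomy x y with hlt | heq | hgt
    · exact absurd h (pow_lt_pow_left₀ hlt hx.1.le (Nat.succ_ne_zero n)).ne
    · exact heq
    · exact absurd h.symm (pow_lt_pow_left₀ hgt hy.1.le (Nat.succ_ne_zero n)).ne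
  have hjac := integral_image_eq_integral_abs_deriv_smul measurableSet_Ioo hderiv hinj
    (fun u : ℝ => u ^ (a - 1) * (1 - u) ^ s)
  rw [himg] at hjac
  have hcongr : ∫ x in Set.Ioo (0:ℝ) 1,
      |((n:ℝ) + 1) * x ^ n| • ((x ^ (n + 1) : ℝ) ^ (a - 1) * (1 - x ^ (n + 1)) ^ s) =
      ∫ x in Set.Ioo (0:ℝ) 1, ((n:ℝ) + 1) * (x ^ l * (1 - x ^ (n + 1)) ^ s) := by
    apply setIntegral_congr_fun measurableSet_Ioo
    intro x hx
    have hx0 : (0:ℝ) < x := hx.1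
    have habs : |((n:ℝ) + 1) * x ^ n| = ((n:ℝ) + 1) * x ^ n := by
      rw [abs_of_nonneg]; positivity
    have hexp : ((n:ℝ) + 1) * (a - 1) = (l:ℝ) - (n:ℝ) := by
      rw [ha_def]; field_simp; ring
    have hpow : (x ^ (n + 1) : ℝ) ^ (a - 1) = x ^ ((l:ℝ) - (n:ℝ)) := by
      rw [← Real.rpow_natCast x (n + 1), ← Real.rpow_mul hx0.le]
      push_cast
      rw [hexp]
    have hxl : x ^ (n:ℕ) * x ^ ((l:ℝ) - (n:ℝ)) = x ^ l := by
      rw [← Real.rpow_natCast x n, ← Real.rpow_add hx0, ← Real.rpow_natCast x l]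
      ring_nf
    simp only [smul_eq_mul, habs, hpow]
    rw [← hxl]
    ring
  rw [hcongr, MeasureTheory.integral_const_mul] at hjac
  have h1 : ∫ x in (0:ℝ)..1, x ^ l * (1 - x ^ (n + 1)) ^ s =
      ∫ x in Set.Ioo (0:ℝ) 1, x ^ l * (1 - x ^ (n + 1)) ^ s := by
    rw [intervalIntegral.integral_of_le zero_le_one, MeasureTheory.integral_Ioc_eq_integral_Ioo]
  have h2 : ∫ u in (0:ℝ)..1, u ^ (a - 1) * (1 - u) ^ s =
      ∫ u in Set.Ioo (0:ℝ) 1, u ^ (a - 1) * (1 - u) ^ s := by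
    rw [intervalIntegral.integral_of_le zero_le_one, MeasureTheory.integral_Ioc_eq_integral_Ioo]
  rw [h1, ← hB, h2, hjac]
  field_simp



/-- Formula (35) of the paper: the product `IP = ∏_{l,m=0}^{n−1} I_{(l,m)}` of the
integrals (15) equals
`(n+1)^{−n²}·(∏_{l=0}^{n−1} Γ((l+1)/(n+1)))^n·(∏_{l=0}^{n−1} Γ((l+1)/(n+1)+1))^n
  / ∏_{l,m=0}^{n−1} Γ((l+m+2)/(n+1)+1)`. -/
theorem IP_eq_gamma_products (n : ℕ) (hn : 1 ≤ n) :
    ∏ l ∈ Finset.range n, ∏ m ∈ Finset.range n,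
        ∫ x in (0 : ℝ)..1, x ^ l * (1 - x ^ (n + 1)) ^ (((m : ℝ) + 1) / ((n : ℝ) + 1)) =
      ((n : ℝ) + 1) ^ (-((n : ℝ) ^ 2)) *
        (∏ l ∈ Finset.range n, Real.Gamma (((l : ℝ) + 1) / ((n : ℝ) + 1))) ^ n *
        (∏ l ∈ Finset.range n, Real.Gamma (((l : ℝ) + 1) / ((n : ℝ) + 1) + 1)) ^ n /
        ∏ l ∈ Finset.range n, ∏ m ∈ Finset.range n,
          Real.Gamma (((l : ℝ) + (m : ℝ) + 2) / ((n : ℝ) + 1) + 1) := by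
  have hn1 : (0:ℝ) < (n:ℝ) + 1 := by positivity
  have hL : ∀ l ∈ Finset.range n, ∀ m ∈ Finset.range n,
      (∫ x in (0:ℝ)..1, x ^ l * (1 - x ^ (n + 1)) ^ (((m:ℝ) + 1) / ((n:ℝ) + 1))) =
      ((n:ℝ) + 1)⁻¹ * Real.Gamma (((l:ℝ) + 1) / ((n:ℝ) + 1)) *
        Real.Gamma (((m:ℝ) + 1) / ((n:ℝ) + 1) + 1) /
        Real.Gamma (((l:ℝ) + (m:ℝ) + 2) / ((n:ℝ) + 1) + 1) := by
    intro l _ m _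
    rw [integral_key n l (by positivity : (0:ℝ) < ((m:ℝ) + 1) / ((n:ℝ) + 1))]
    have : ((l:ℝ) + 1) / ((n:ℝ) + 1) + (((m:ℝ) + 1) / ((n:ℝ) + 1) + 1) =
        ((l:ℝ) + (m:ℝ) + 2) / ((n:ℝ) + 1) + 1 := by
      field_simp
      ring
    rw [this]
    ring
  rw [Finset.prod_congr rfl fun l hl => Finset.prod_congr rfl (hL l hl)]
  have hpow : ((n:ℝ) + 1) ^ (-((n:ℝ) ^ 2)) = (((n:ℝ) + 1)⁻¹) ^ (n * n) := by
    have h2 : ((n:ℝ) ^ 2) = ((n * n : ℕ) : ℝ) := by push_cast; ring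
    rw [h2, Real.rpow_neg hn1.le, Real.rpow_natCast, ← inv_pow]
  rw [hpow]
  simp only [Finset.prod_div_distrib, Finset.prod_mul_distrib, Finset.prod_const,
    Finset.card_range, Finset.prod_pow, mul_pow]
  ring
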